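/- Let d ≥ 1, R > 0, let v ∈ ℝ^d be a unit vector, let x be distributed uniformly on the sphere of radius R in ℝ^d, and let γ ∈ (0,1]. Then E[log(1 + e^{−|v·x|})] ≤ 2γ + e^{−γR/√d}. -/

import Mathlib

open MeasureTheory Real Set RealInnerProductSpace
open scoped ENNReal

noncomputable section LogisticAux

namespace LogisticAux

/-! ### One-dimensional Gaussian facts -/

def gdens : ℝ → ℝ := fun t => Real.exp (-(1/2) * t ^ 2)

lemma gdens_def (t : ℝ) : gdens t = Real.exp (-(1/2) * t ^ 2) := rfl

lemma gdens_nonneg (t : ℝ) : 0 ≤ gdens t := (Real.exp_pos _).le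

lemma gdens_le_one (t : ℝ) : gdens t ≤ 1 := by
  rw [gdens_def]
  apply Real.exp_le_one_iff.mpr
  nlinarith [sq_nonneg t]

lemma integrable_gdens : Integrable gdens := integrable_exp_neg_mul_sq (by norm_num : (0:ℝ) < 1/2)

lemma integral_gdens : ∫ x, gdens x = √(2 * π) := by
  simp only [gdens_def]
  rw [integral_gaussian, show (π/(1/2) : ℝ) = 2*π by ring]

lemma integrable_x4_gdens : Integrable (fun x : ℝ => x ^ 4 * gdens x) := by
  have h := integrable_rpow_mul_exp_neg_mul_sq (by norm_num : (0:ℝ) < 1/2) (s := 4) (by norm_num)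
  refine h.congr (Filter.Eventually.of_forall fun x => ?_)
  show x ^ (4:ℝ) * rexp (-(1/2) * x ^ 2) = x ^ 4 * gdens x
  rw [gdens_def, show ((4:ℝ) = ((4:ℕ):ℝ)) by norm_num, Real.rpow_natCast]

lemma integral_x4_gdens : ∫ x, x ^ 4 * gdens x = 3 * √(2 * π) := by
  have habs : (fun x : ℝ => x ^ 4 * gdens x) = (fun x : ℝ => |x| ^ 4 * gdens |x|) := by
    funext x
    simp only [gdens_def, show (4 : ℕ) = 2 * 2 from rfl, pow_mul, sq_abs]
  rw [habs]
  rw [integral_comp_abs (f := fun x : ℝ => x ^ 4 * gdens x)]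
  have : ∫ x in Ioi (0:ℝ), x ^ 4 * gdens x = ∫ x in Ioi (0:ℝ), x ^ (4:ℝ) * exp (-(1/2) * x ^ (2:ℝ)) := by
    refine setIntegral_congr_fun measurableSet_Ioi (fun x hx => ?_)
    rw [gdens_def, show ((4:ℝ) = ((4:ℕ):ℝ)) by norm_num, show ((2:ℝ) = ((2:ℕ):ℝ)) by norm_num,
      Real.rpow_natCast, Real.rpow_natCast]
  rw [this, integral_rpow_mul_exp_neg_mul_rpow (by norm_num) (by norm_num) (by norm_num)]
  have h52 : ((4:ℝ) + 1) / 2 = 3/2 + 1 := by norm_num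
  rw [h52, Real.Gamma_add_one (by norm_num), show ((3:ℝ)/2 = 1/2 + 1) by norm_num,
    Real.Gamma_add_one (by norm_num), Real.Gamma_one_half_eq]
  have hb : ((1:ℝ)/2) ^ (-((4:ℝ) + 1) / 2) = 2 ^ ((5:ℝ)/2) := by
    rw [show ((1:ℝ)/2) = (2:ℝ)⁻¹ by norm_num, Real.inv_rpow (by norm_num : (0:ℝ) ≤ 2),
      ← Real.rpow_neg (by norm_num : (0:ℝ) ≤ 2)]
    norm_num
  rw [hb, show ((5:ℝ)/2 = 2 + 1/2) by norm_num, Real.rpow_add (by norm_num),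
    Real.rpow_two, ← Real.sqrt_eq_rpow, Real.sqrt_mul (by norm_num)]
  ring_nf

/-! ### The auxiliary Gaussian-type measure on Euclidean space -/

variable {d : ℕ}

abbrev Euc (d : ℕ) := EuclideanSpace ℝ (Fin d)

def dens (d : ℕ) : Euc d → ℝ≥0∞ := fun y => ENNReal.ofReal (Real.exp (-(1/2) * ‖y‖ ^ 2))

lemma dens_meas : Measurable (dens d) :=
  (Real.continuous_exp.comp (continuous_const.mul (continuous_norm.pow 2))).measurable.ennreal_ofReal

def nu (d : ℕ) : Measure (Euc d) := volume.withDensity (dens d)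

instance : SFinite (nu d) := by unfold nu; infer_instance

/-- Rotation invariance of `nu`. -/
lemma nu_map (T : Euc d ≃ₗᵢ[ℝ] Euc d) : (nu d).map T = nu d := by
  ext s hs
  rw [Measure.map_apply T.continuous.measurable hs, nu, withDensity_apply _ hs,
    withDensity_apply _ (T.continuous.measurable hs)]
  have h := (T.measurePreserving).setLIntegral_comp_preimage hs (f := dens d) dens_meas
  rw [← h]
  refine setLIntegral_congr_fun (T.continuous.measurable hs) (fun y _ => ?_)
  simp only [dens, T.norm_map]

/-- Transport of lintegrals to the product space. -/
lemma lint_transport (g : Euc d → ℝ≥0∞) (hg : Measurable g) :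
    ∫⁻ y, g y = ∫⁻ c : Fin d → ℝ, g (((MeasurableEquiv.toLp 2 (Fin d → ℝ)).symm).symm c) :=
  (((EuclideanSpace.volume_preserving_symm_measurableEquiv_toLp (Fin d)).symm
    ((MeasurableEquiv.toLp 2 (Fin d → ℝ)).symm)).lintegral_comp hg).symm

lemma symm_apply (c : Fin d → ℝ) (i : Fin d) :
    (((MeasurableEquiv.toLp 2 (Fin d → ℝ)).symm).symm c : Euc d) i = c i := rfl

lemma normsq (y : Euc d) : ‖y‖ ^ 2 = ∑ i, (y i) ^ 2 := by
  rw [EuclideanSpace.norm_eq, Real.sq_sqrt (by positivity)]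
  refine Finset.sum_congr rfl fun i _ => ?_
  rw [Real.norm_eq_abs, sq_abs]

lemma exp_normsq (c : Fin d → ℝ) :
    Real.exp (-(1/2) * ‖(((MeasurableEquiv.toLp 2 (Fin d → ℝ)).symm).symm c : Euc d)‖ ^ 2)
      = ∏ i, gdens (c i) := by
  rw [normsq]
  simp only [symm_apply]
  rw [Finset.mul_sum, Real.exp_sum]
  rfl

lemma dens_symm (c : Fin d → ℝ) :
    dens d (((MeasurableEquiv.toLp 2 (Fin d → ℝ)).symm).symm c)
      = ENNReal.ofReal (∏ i, gdens (c i)) := by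
  rw [dens, exp_normsq]

lemma nu_univ : nu d univ = ENNReal.ofReal (√(2 * π) ^ d) := by
  rw [nu, withDensity_apply _ MeasurableSet.univ, Measure.restrict_univ,
    lint_transport (dens d) dens_meas]
  simp only [dens_symm]
  rw [volume_pi]
  rw [← ofReal_integral_eq_lintegral_ofReal
    (Integrable.fintype_prod (f := fun _ => gdens) fun _ => integrable_gdens)
    (ae_of_all _ fun c => Finset.prod_nonneg fun i _ => gdens_nonneg _)]
  rw [MeasureTheory.integral_fintype_prod_eq_pow gdens, integral_gdens, Fintype.card_fin]


lemma gdens_cont : Continuous gdens :=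
  Real.continuous_exp.comp (continuous_const.mul (continuous_pow 2))

lemma lint_prod_pi (f : Fin d → ℝ → ℝ) (hint : ∀ i, Integrable (f i))
    (hnn : ∀ i t, 0 ≤ f i t) :
    ∫⁻ c : Fin d → ℝ, ENNReal.ofReal (∏ i, f i (c i))
      = ENNReal.ofReal (∏ i, ∫ t, f i t) := by
  rw [volume_pi]
  rw [← ofReal_integral_eq_lintegral_ofReal (Integrable.fintype_prod hint)
    (ae_of_all _ fun c => Finset.prod_nonneg fun i _ => hnn i _),
    MeasureTheory.integral_fintype_prod_eq_prod]

lemma prod_gdens_nonneg (s : Finset (Fin d)) (c : Fin d → ℝ) :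
    0 ≤ ∏ k ∈ s, gdens (c k) := Finset.prod_nonneg fun k _ => gdens_nonneg _

lemma lint_single_special (hd : 1 ≤ d) (i : Fin d) (h : ℝ → ℝ) (hint : Integrable h)
    (hnn : ∀ t, 0 ≤ h t) :
    ∫⁻ c : Fin d → ℝ,
        ENNReal.ofReal (h (c i) * ∏ k ∈ Finset.univ.erase i, gdens (c k))
      = ENNReal.ofReal ((∫ t, h t) * √(2*π) ^ (d - 1)) := by
  have hpt : ∀ c : Fin d → ℝ, h (c i) * ∏ k ∈ Finset.univ.erase i, gdens (c k)
      = ∏ k, (if k = i then h (c k) else gdens (c k)) := by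
    intro c
    rw [← Finset.mul_prod_erase Finset.univ _ (Finset.mem_univ i), if_pos rfl]
    congr 1
    exact (Finset.prod_congr rfl fun k hk => by rw [if_neg (Finset.ne_of_mem_erase hk)])
  simp_rw [hpt]
  rw [lint_prod_pi (fun k => fun t => if k = i then h t else gdens t)
      (fun k => by by_cases hk : k = i <;> simp [hk, hint, integrable_gdens])
      (fun k t => by by_cases hk : k = i <;> simp [hk, hnn t, gdens_nonneg t])]
  congr 1
  rw [← Finset.mul_prod_erase Finset.univ _ (Finset.mem_univ i)]
  have e1 : ∫ t, (if i = i then h t else gdens t) = ∫ t, h t := by simp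
  have e2 : ∀ k ∈ Finset.univ.erase i,
      (∫ t, if k = i then h t else gdens t) = √(2*π) := by
    intro k hk
    simp only [if_neg (Finset.ne_of_mem_erase hk), integral_gdens]
  rw [e1, Finset.prod_congr rfl e2, Finset.prod_const,
    Finset.card_erase_of_mem (Finset.mem_univ i), Finset.card_univ, Fintype.card_fin]

lemma nu_tail (hd : 1 ≤ d) :
    nu d {y : Euc d | 2 * √(d:ℝ) < ‖y‖} ≤ ENNReal.ofReal ((3/16) * √(2*π) ^ d) := by
  have hd0 : (0:ℝ) < d := by exact_mod_cast Nat.lt_of_lt_of_le Nat.zero_lt_one hd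
  have hB : MeasurableSet {y : Euc d | 2 * √(d:ℝ) < ‖y‖} :=
    (isOpen_lt continuous_const continuous_norm).measurableSet
  set K : ℝ := (16 * (d:ℝ)^2)⁻¹ * (d:ℝ) with hK
  have hK0 : 0 ≤ K := by positivity
  have h1 : nu d {y : Euc d | 2 * √(d:ℝ) < ‖y‖}
      ≤ ∫⁻ y : Euc d, ENNReal.ofReal (K * ((d:ℝ)⁻¹ * ‖y‖^4 * Real.exp (-(1/2) * ‖y‖^2))) := by
    rw [nu, withDensity_apply _ hB]
    refine le_trans (setLIntegral_mono (by fun_prop) fun y hy => ?_)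
      (setLIntegral_le_lintegral _ _)
    have hy' : 2 * √(d:ℝ) < ‖y‖ := hy
    have hyn : 16 * (d:ℝ)^2 ≤ ‖y‖^4 := by
      have h2 : (2 * √(d:ℝ))^4 ≤ ‖y‖^4 := by
        apply pow_le_pow_left₀ (by positivity) hy'.le
      calc 16 * (d:ℝ)^2 = (2 * √(d:ℝ))^4 := by
            rw [mul_pow, show (4:ℕ) = 2*2 from rfl, pow_mul, pow_mul,
              Real.sq_sqrt hd0.le]
            norm_num
        _ ≤ ‖y‖^4 := h2
    rw [dens]
    apply ENNReal.ofReal_le_ofReal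
    have hexp := Real.exp_pos (-(1/2) * ‖y‖^2)
    have hd2 : (0:ℝ) < 16 * (d:ℝ)^2 := by positivity
    have h1K : (1:ℝ) ≤ (16 * (d:ℝ)^2)⁻¹ * ‖y‖^4 := by
      rw [inv_mul_eq_div, le_div_iff₀ hd2]
      linarith
    calc Real.exp (-(1/2) * ‖y‖^2) = 1 * Real.exp (-(1/2) * ‖y‖^2) := (one_mul _).symm
      _ ≤ ((16 * (d:ℝ)^2)⁻¹ * ‖y‖^4) * Real.exp (-(1/2) * ‖y‖^2) :=
          mul_le_mul_of_nonneg_right h1K hexp.le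
      _ = K * ((d:ℝ)⁻¹ * ‖y‖^4 * Real.exp (-(1/2) * ‖y‖^2)) := by
          rw [hK]
          field_simp
  have h2 : ∫⁻ y : Euc d, ENNReal.ofReal (K * ((d:ℝ)⁻¹ * ‖y‖^4 * Real.exp (-(1/2) * ‖y‖^2)))
      ≤ ENNReal.ofReal ((3/16) * √(2*π) ^ d) := by
    rw [lint_transport _ (by fun_prop)]
    have hpt : ∀ c : Fin d → ℝ,
        ENNReal.ofReal (K * ((d:ℝ)⁻¹ * ‖(((MeasurableEquiv.toLp 2 (Fin d → ℝ)).symm).symm c : Euc d)‖^4 *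
            Real.exp (-(1/2) * ‖(((MeasurableEquiv.toLp 2 (Fin d → ℝ)).symm).symm c : Euc d)‖^2)))
        ≤ ∑ i, ENNReal.ofReal ((K * ((c i)^4 * gdens (c i)))
            * ∏ k ∈ Finset.univ.erase i, gdens (c k)) := by
      intro c
      have hterm0 : ∀ i : Fin d, (0:ℝ) ≤ (K * ((c i)^4 * gdens (c i)))
          * ∏ k ∈ Finset.univ.erase i, gdens (c k) :=
        fun i => mul_nonneg (mul_nonneg hK0 (mul_nonneg (by positivity) (gdens_nonneg _)))
          (prod_gdens_nonneg _ _)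
      rw [← ENNReal.ofReal_sum_of_nonneg (fun i _ => hterm0 i)]
      apply ENNReal.ofReal_le_ofReal
      have hnorm4 : ‖(((MeasurableEquiv.toLp 2 (Fin d → ℝ)).symm).symm c : Euc d)‖^4
          = ((∑ i, (c i)^2))^2 := by
        rw [show (4:ℕ) = 2*2 from rfl, pow_mul, normsq]
        simp only [symm_apply]
      have hcs : ((∑ i, (c i)^2))^2 ≤ (d:ℝ) * ∑ i, (c i)^4 := by
        have := sq_sum_le_card_mul_sum_sq (s := Finset.univ) (f := fun i : Fin d => (c i)^2)
        simpa [Finset.card_univ, show ∀ t:ℝ, (t^2)^2 = t^4 from fun t => by ring] using this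
      have hsplit : ∀ i : Fin d, (K * ((c i)^4 * gdens (c i)))
          * ∏ k ∈ Finset.univ.erase i, gdens (c k)
          = K * ((c i)^4 * ∏ k, gdens (c k)) := by
        intro i
        rw [← Finset.mul_prod_erase Finset.univ (fun k => gdens (c k)) (Finset.mem_univ i)]
        ring
      rw [Finset.sum_congr rfl fun i _ => hsplit i, hnorm4, exp_normsq, ← Finset.mul_sum,
        ← Finset.sum_mul]
      have hprodnn : (0:ℝ) ≤ ∏ k, gdens (c k) := prod_gdens_nonneg _ _
      calc K * ((d:ℝ)⁻¹ * (∑ i, (c i)^2)^2 * ∏ i, gdens (c i))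
          ≤ K * ((d:ℝ)⁻¹ * ((d:ℝ) * ∑ i, (c i)^4) * ∏ i, gdens (c i)) := by
            apply mul_le_mul_of_nonneg_left _ hK0
            apply mul_le_mul_of_nonneg_right _ hprodnn
            apply mul_le_mul_of_nonneg_left hcs (by positivity)
        _ = K * ((∑ i, (c i)^4) * ∏ k, gdens (c k)) := by
            field_simp
    calc ∫⁻ c : Fin d → ℝ, ENNReal.ofReal
            (K * ((d:ℝ)⁻¹ * ‖(((MeasurableEquiv.toLp 2 (Fin d → ℝ)).symm).symm c : Euc d)‖^4 *
            Real.exp (-(1/2) * ‖(((MeasurableEquiv.toLp 2 (Fin d → ℝ)).symm).symm c : Euc d)‖^2)))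
        ≤ ∫⁻ c : Fin d → ℝ, ∑ i, ENNReal.ofReal ((K * ((c i)^4 * gdens (c i)))
            * ∏ k ∈ Finset.univ.erase i, gdens (c k)) := lintegral_mono hpt
      _ = ∑ i, ∫⁻ c : Fin d → ℝ, ENNReal.ofReal ((K * ((c i)^4 * gdens (c i)))
            * ∏ k ∈ Finset.univ.erase i, gdens (c k)) := by
          apply lintegral_finset_sum
          intro i _
          apply Measurable.ennreal_ofReal
          apply Continuous.measurable
          exact ((continuous_const.mul (((continuous_apply i).pow 4).mul
            (gdens_cont.comp (continuous_apply i)))).mul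
            (continuous_finset_prod _ fun k _ => gdens_cont.comp (continuous_apply k)))
      _ = ∑ _i : Fin d, ENNReal.ofReal ((K * (3 * √(2*π))) * √(2*π) ^ (d-1)) := by
          refine Finset.sum_congr rfl fun i _ => ?_
          have := lint_single_special hd i (fun t => K * (t^4 * gdens t))
            (by
              have := integrable_x4_gdens.const_mul K
              simpa [mul_assoc] using this)
            (fun t => mul_nonneg hK0 (mul_nonneg (by positivity) (gdens_nonneg _)))
          rw [this, integral_const_mul, integral_x4_gdens]
      _ ≤ ENNReal.ofReal ((3/16) * √(2*π) ^ d) := by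
          rw [Finset.sum_const, Finset.card_univ, Fintype.card_fin, nsmul_eq_mul,
            ← ENNReal.ofReal_natCast d, ← ENNReal.ofReal_mul (by positivity)]
          apply le_of_eq
          congr 1
          have hpow : √(2*π) ^ d = √(2*π) * √(2*π) ^ (d-1) := by
            rw [← pow_succ', Nat.sub_add_cancel hd]
          rw [hpow, hK]
          field_simp
  exact h1.trans h2


lemma exists_rotation {u w : Euc d} (hu : ‖u‖ = 1) (hw : ‖w‖ = 1) :
    ∃ T : Euc d ≃ₗᵢ[ℝ] Euc d, T u = w :=
  ⟨Submodule.reflection (ℝ ∙ (u - w))ᗮ, Submodule.reflection_sub (by rw [hu, hw])⟩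

lemma nu_slice (hd : 1 ≤ d) {R b : ℝ} (hR : 0 < R) (hb : 0 < b) (x : Euc d) (hx : ‖x‖ = R) :
    nu d {y : Euc d | |⟪y, x⟫| < b} ≤ ENNReal.ofReal ((2 * (b/R)) * √(2*π) ^ (d-1)) := by
  set i0 : Fin d := ⟨0, hd⟩ with hi0
  set e : Euc d := EuclideanSpace.single i0 (1:ℝ) with he
  have hue : ‖e‖ = 1 := by rw [he, EuclideanSpace.norm_single]; simp
  have huu : ‖(R⁻¹ • x : Euc d)‖ = 1 := by
    rw [norm_smul, hx, Real.norm_eq_abs, abs_of_pos (inv_pos.mpr hR), inv_mul_cancel₀ hR.ne']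
  obtain ⟨T, hT⟩ := exists_rotation hue huu
  have hTz : T (R • e) = x := by
    rw [_root_.map_smul, hT, smul_smul, mul_inv_cancel₀ hR.ne', one_smul]
  have hSmeas : MeasurableSet {y : Euc d | |⟪y, x⟫| < b} :=
    (isOpen_lt ((continuous_id.inner continuous_const).abs) continuous_const).measurableSet
  have hbR : 0 < b / R := div_pos hb hR
  have key : nu d {y : Euc d | |⟪y, x⟫| < b} = nu d {y : Euc d | |⟪y, R • e⟫| < b} := by
    conv_lhs => rw [← nu_map T]
    rw [Measure.map_apply T.continuous.measurable hSmeas]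
    congr 1
    ext y
    simp only [mem_preimage, mem_setOf_eq]
    rw [← hTz, T.inner_map_map]
  rw [key]
  have hinner : ∀ y : Euc d, ⟪y, R • e⟫ = R * y i0 := by
    intro y
    rw [real_inner_smul_right, he, EuclideanSpace.inner_single_right]
    simp
  have hset : {y : Euc d | |⟪y, R • e⟫| < b}
      = {y : Euc d | y i0 ∈ Ioo (-(b/R)) (b/R)} := by
    ext y
    simp only [mem_setOf_eq, hinner, mem_Ioo, abs_mul, abs_of_pos hR]
    rw [← abs_lt, ← lt_div_iff₀' hR]
  have hcoord : Measurable fun y : Euc d => y i0 :=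
    (measurable_pi_apply i0).comp ((MeasurableEquiv.toLp 2 (Fin d → ℝ)).symm).measurable
  have hmeas2 : MeasurableSet {y : Euc d | y i0 ∈ Ioo (-(b/R)) (b/R)} :=
    hcoord measurableSet_Ioo
  rw [hset, nu, withDensity_apply _ hmeas2, ← lintegral_indicator hmeas2,
    lint_transport _ (dens_meas.indicator hmeas2)]
  have hpt : ∀ c : Fin d → ℝ, {y : Euc d | y i0 ∈ Ioo (-(b/R)) (b/R)}.indicator (dens d)
      (((MeasurableEquiv.toLp 2 (Fin d → ℝ)).symm).symm c)
      = ENNReal.ofReal ((Ioo (-(b/R)) (b/R)).indicator gdens (c i0)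
          * ∏ k ∈ Finset.univ.erase i0, gdens (c k)) := by
    intro c
    by_cases hc : c i0 ∈ Ioo (-(b/R)) (b/R)
    · rw [indicator_of_mem (by simpa [symm_apply] using hc), indicator_of_mem hc, dens_symm,
        ← Finset.mul_prod_erase Finset.univ _ (Finset.mem_univ i0)]
    · rw [indicator_of_notMem (by simpa [symm_apply] using hc), indicator_of_notMem hc,
        zero_mul, ENNReal.ofReal_zero]
  simp_rw [hpt]
  rw [lint_single_special hd i0 _ (integrable_gdens.indicator measurableSet_Ioo)
      (fun t => indicator_nonneg (fun s _ => gdens_nonneg s) _)]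
  apply ENNReal.ofReal_le_ofReal
  apply mul_le_mul_of_nonneg_right _ (by positivity)
  rw [MeasureTheory.integral_indicator measurableSet_Ioo]
  calc ∫ t in Ioo (-(b/R)) (b/R), gdens t ≤ ∫ _t in Ioo (-(b/R)) (b/R), (1:ℝ) := by
        apply setIntegral_mono_on integrable_gdens.integrableOn
          (integrableOn_const measure_Ioo_lt_top.ne) measurableSet_Ioo
          (fun t _ => gdens_le_one t)
    _ = 2 * (b/R) := by
        rw [setIntegral_const, Real.volume_real_Ioo_of_le (by linarith), smul_eq_mul, mul_one]
        ring


lemma nu_W (hd : 1 ≤ d) :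
    ENNReal.ofReal ((13/16) * √(2*π)^d) ≤ nu d {y : Euc d | ‖y‖ ≤ 2*√(d:ℝ)} := by
  have hWmeas : MeasurableSet {y : Euc d | ‖y‖ ≤ 2*√(d:ℝ)} :=
    (isClosed_le continuous_norm continuous_const).measurableSet
  have hcompl : {y : Euc d | ‖y‖ ≤ 2*√(d:ℝ)}ᶜ = {y : Euc d | 2*√(d:ℝ) < ‖y‖} := by
    ext y; simp [not_le]
  have htot : nu d univ ≤ nu d {y : Euc d | ‖y‖ ≤ 2*√(d:ℝ)}
      + ENNReal.ofReal ((3/16) * √(2*π)^d) := by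
    calc nu d univ = nu d ({y : Euc d | ‖y‖ ≤ 2*√(d:ℝ)} ∪ {y : Euc d | ‖y‖ ≤ 2*√(d:ℝ)}ᶜ) := by
          rw [union_compl_self]
      _ ≤ nu d {y : Euc d | ‖y‖ ≤ 2*√(d:ℝ)} + nu d {y : Euc d | ‖y‖ ≤ 2*√(d:ℝ)}ᶜ :=
          measure_union_le _ _
      _ ≤ _ := by
          rw [hcompl]
          exact add_le_add_right (nu_tail hd) _
  have hsplit : ENNReal.ofReal (√(2*π)^d)
      = ENNReal.ofReal ((13/16) * √(2*π)^d) + ENNReal.ofReal ((3/16) * √(2*π)^d) := by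
    rw [← ENNReal.ofReal_add (by positivity) (by positivity)]
    congr 1
    ring
  rw [nu_univ, hsplit] at htot
  exact (ENNReal.add_le_add_iff_right ENNReal.ofReal_ne_top).mp htot

end LogisticAux

open LogisticAux

/-- **A margin-based bound on the expected logistic loss of the true classifier.**

Let `d ≥ 1`, `R > 0`, let `v ∈ ℝ^d` be a unit vector, let `μ` be the uniform distribution on
the sphere of radius `R` in `ℝ^d` (the rotation-invariant probability measure supported on
`{x : ‖x‖ = R}`), and let `γ ∈ (0,1]`.  Then
`E_{x∼μ}[log(1 + e^{−|v·x|})] ≤ 2γ + e^{−γR/√d}`. -/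
theorem logistic_loss_margin_bound
    (d : ℕ) (hd : 1 ≤ d) (R : ℝ) (hR : 0 < R)
    (μ : Measure (EuclideanSpace ℝ (Fin d))) [IsProbabilityMeasure μ]
    (hsupp : μ {x | ‖x‖ = R}ᶜ = 0)
    (hrot : ∀ T : EuclideanSpace ℝ (Fin d) ≃ₗᵢ[ℝ] EuclideanSpace ℝ (Fin d),
      μ.map T = μ)
    (v : EuclideanSpace ℝ (Fin d)) (hv : ‖v‖ = 1)
    (γ : ℝ) (hγ : 0 < γ ∧ γ ≤ 1) :
    (∫ x, Real.log (1 + Real.exp (-|⟪v, x⟫|)) ∂μ)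
      ≤ 2 * γ + Real.exp (-(γ * R / Real.sqrt d)) := by
  classical
  obtain ⟨hγ0, hγ1⟩ := hγ
  have hd0 : (0:ℝ) < d := by exact_mod_cast Nat.lt_of_lt_of_le Nat.zero_lt_one hd
  have hsd : (0:ℝ) < √(d:ℝ) := Real.sqrt_pos.mpr hd0
  set a : ℝ := γ * R / √(d:ℝ) with ha
  have ha0 : 0 < a := by positivity
  set A : Set (Euc d) := {x | |⟪v, x⟫| < a} with hA
  have hAmeas : MeasurableSet A :=
    (isOpen_lt ((continuous_const.inner continuous_id).abs) continuous_const).measurableSet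
  -- rotation invariance of the measure of slabs
  have hB : ∀ u : Euc d, ‖u‖ = 1 → μ {x | |⟪u, x⟫| < a} = μ A := by
    intro u hu
    obtain ⟨T, hT⟩ := exists_rotation hv hu
    have hmeasu : MeasurableSet {x : Euc d | |⟪u, x⟫| < a} :=
      (isOpen_lt ((continuous_const.inner continuous_id).abs) continuous_const).measurableSet
    conv_lhs => rw [← hrot T]
    rw [Measure.map_apply T.continuous.measurable hmeasu]
    congr 1
    ext x
    simp only [mem_preimage, mem_setOf_eq, hA]
    rw [← hT, T.inner_map_map]
  -- the key small-ball estimate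
  have hAbound : μ A ≤ ENNReal.ofReal (2*γ) := by
    set b : ℝ := 2*γ*R with hb
    have hb0 : 0 < b := by positivity
    set W : Set (Euc d) := {y | ‖y‖ ≤ 2*√(d:ℝ)} with hW
    set S : Set (Euc d × Euc d) := {p | |⟪p.1, p.2⟫| < b} with hS
    have hSmeas : MeasurableSet S :=
      (isOpen_lt ((continuous_fst.inner continuous_snd).abs) continuous_const).measurableSet
    have hptW : ∀ y ∈ W, μ A ≤ μ {x | |⟪y, x⟫| < b} := by
      intro y hy
      by_cases hy0 : y = 0
      · subst hy0
        have huniv : {x : Euc d | |⟪(0 : Euc d), x⟫| < b} = univ := by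
          ext x; simp [inner_zero_left, hb0]
        rw [huniv]
        exact measure_mono (subset_univ A)
      · have hyn : 0 < ‖y‖ := norm_pos_iff.mpr hy0
        set u : Euc d := ‖y‖⁻¹ • y with hu
        have hun : ‖u‖ = 1 := by
          rw [hu, norm_smul, Real.norm_eq_abs, abs_of_pos (inv_pos.mpr hyn),
            inv_mul_cancel₀ hyn.ne']
        rw [← hB u hun]
        apply measure_mono
        intro x hx
        have hx' : |⟪u, x⟫| < a := hx
        have hyy : ‖y‖ • u = y := by rw [hu, smul_smul, mul_inv_cancel₀ hyn.ne', one_smul]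
        have h2a : 2*√(d:ℝ) * a = b := by
          rw [ha, hb]
          field_simp
        have hinner : ⟪y, x⟫ = ‖y‖ * ⟪u, x⟫ := by
          conv_lhs => rw [← hyy]
          exact real_inner_smul_left _ _ _
        have : |⟪y, x⟫| < b := by
          calc |⟪y, x⟫| = ‖y‖ * |⟪u, x⟫| := by
                rw [hinner, abs_mul, abs_of_pos hyn]
            _ < ‖y‖ * a := mul_lt_mul_of_pos_left hx' hyn
            _ ≤ 2*√(d:ℝ) * a := mul_le_mul_of_nonneg_right hy ha0.le
            _ = b := h2a
        exact this
    have c1 : μ A * nu d W ≤ ∫⁻ y in W, μ (Prod.mk y ⁻¹' S) ∂(nu d) := by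
      rw [← setLIntegral_const W (μ A)]
      exact setLIntegral_mono (measurable_measure_prodMk_left hSmeas) hptW
    have c3 : ∫⁻ y, μ (Prod.mk y ⁻¹' S) ∂(nu d) = ((nu d).prod μ) S :=
      (Measure.prod_apply hSmeas).symm
    have c4 : ((nu d).prod μ) S = ∫⁻ x, nu d ((fun y => (y, x)) ⁻¹' S) ∂μ :=
      Measure.prod_apply_symm hSmeas
    have c5 : ∫⁻ x, nu d ((fun y => (y, x)) ⁻¹' S) ∂μ
        ≤ ENNReal.ofReal ((4*γ) * √(2*π)^(d-1)) := by
      have hae : ∀ᵐ x ∂μ, ‖x‖ = R := by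
        rw [ae_iff]
        exact hsupp
      calc ∫⁻ x, nu d ((fun y => (y, x)) ⁻¹' S) ∂μ
          ≤ ∫⁻ _x, ENNReal.ofReal ((4*γ) * √(2*π)^(d-1)) ∂μ := by
            apply lintegral_mono_ae
            filter_upwards [hae] with x hx
            have hslice := nu_slice hd hR hb0 x hx
            have h4γ : 2 * (b / R) = 4 * γ := by
              rw [hb]
              field_simp
              ring
            rw [h4γ] at hslice
            exact hslice
        _ = ENNReal.ofReal ((4*γ) * √(2*π)^(d-1)) := by
            rw [lintegral_const, measure_univ, mul_one]
    have hcmb : μ A * ENNReal.ofReal ((13/16) * √(2*π)^d)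
        ≤ ENNReal.ofReal ((4*γ) * √(2*π)^(d-1)) :=
      le_trans (mul_le_mul_right (nu_W hd) _)
        (le_trans c1 (le_trans (setLIntegral_le_lintegral _ _)
          (le_trans c3.le (c4 ▸ c5))))
    have hsq : (32:ℝ)/13 ≤ √(2*π) := by
      rw [show (32:ℝ)/13 = √((32/13)^2) from (Real.sqrt_sq (by norm_num)).symm]
      apply Real.sqrt_le_sqrt
      nlinarith [Real.pi_gt_d6]
    have hfin : ENNReal.ofReal ((4*γ) * √(2*π)^(d-1))
        ≤ ENNReal.ofReal (2*γ) * ENNReal.ofReal ((13/16) * √(2*π)^d) := by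
      rw [← ENNReal.ofReal_mul (by positivity)]
      apply ENNReal.ofReal_le_ofReal
      have hpow : √(2*π) ^ d = √(2*π) * √(2*π) ^ (d-1) := by
        rw [← pow_succ', Nat.sub_add_cancel hd]
      rw [hpow]
      have hKnn : (0:ℝ) ≤ √(2*π)^(d-1) := by positivity
      have hmul := mul_le_mul_of_nonneg_right hsq (mul_nonneg hγ0.le hKnn)
      nlinarith [hmul]
    have hne0 : ENNReal.ofReal ((13/16) * √(2*π)^d) ≠ 0 := by
      rw [ne_eq, ENNReal.ofReal_eq_zero, not_le]
      positivity
    exact (ENNReal.mul_le_mul_iff_left hne0 ENNReal.ofReal_ne_top).mp (le_trans hcmb hfin)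
  -- pointwise bound on the loss
  have hpt : ∀ x : Euc d, Real.log (1 + Real.exp (-|⟪v, x⟫|))
      ≤ A.indicator (fun _ => (1:ℝ)) x + Real.exp (-a) := by
    intro x
    by_cases hx : x ∈ A
    · rw [indicator_of_mem hx]
      have h1 : Real.exp (-|⟪v, x⟫|) ≤ 1 := Real.exp_le_one_iff.mpr (neg_nonpos.mpr (abs_nonneg _))
      have h2 : Real.log (1 + Real.exp (-|⟪v, x⟫|)) ≤ Real.log 2 :=
        Real.log_le_log (by positivity) (by linarith)
      have h3 : Real.log 2 ≤ 1 := by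
        have := Real.log_le_sub_one_of_pos (by norm_num : (0:ℝ) < 2)
        linarith
      have := Real.exp_pos (-a)
      linarith
    · rw [indicator_of_notMem hx, zero_add]
      have hge : a ≤ |⟪v, x⟫| := not_lt.mp hx
      have h1 : Real.log (1 + Real.exp (-|⟪v, x⟫|)) ≤ Real.exp (-|⟪v, x⟫|) := by
        have := Real.log_le_sub_one_of_pos
          (show (0:ℝ) < 1 + Real.exp (-|⟪v, x⟫|) by positivity)
        linarith
      have h2 : Real.exp (-|⟪v, x⟫|) ≤ Real.exp (-a) := Real.exp_le_exp.mpr (by linarith)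
      linarith
  have hcont : Continuous fun x : Euc d => Real.log (1 + Real.exp (-|⟪v, x⟫|)) := by
    apply Continuous.log
    · exact continuous_const.add (((continuous_const.inner continuous_id).abs.neg).rexp)
    · intro x
      positivity
  have hint1 : Integrable (fun x => Real.log (1 + Real.exp (-|⟪v, x⟫|))) μ := by
    apply Integrable.mono' (integrable_const (1:ℝ)) hcont.aestronglyMeasurable
    filter_upwards with x
    have h1e : (1:ℝ) ≤ 1 + Real.exp (-|⟪v, x⟫|) := by
      have := Real.exp_pos (-|⟪v, x⟫|); linarith
    rw [Real.norm_eq_abs, abs_of_nonneg (Real.log_nonneg h1e)]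
    have h1 : Real.exp (-|⟪v, x⟫|) ≤ 1 := Real.exp_le_one_iff.mpr (neg_nonpos.mpr (abs_nonneg _))
    have h2 : Real.log (1 + Real.exp (-|⟪v, x⟫|)) ≤ Real.log 2 :=
      Real.log_le_log (by positivity) (by linarith)
    have h3 : Real.log 2 ≤ 1 := by
      have := Real.log_le_sub_one_of_pos (by norm_num : (0:ℝ) < 2)
      linarith
    linarith
  calc ∫ x, Real.log (1 + Real.exp (-|⟪v, x⟫|)) ∂μ
      ≤ ∫ x, (A.indicator (fun _ => (1:ℝ)) x + Real.exp (-a)) ∂μ :=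
        integral_mono hint1
          (((integrable_const (1:ℝ)).indicator hAmeas).add (integrable_const _)) hpt
    _ = (μ A).toReal + Real.exp (-a) := by
        rw [integral_add ((integrable_const (1:ℝ)).indicator hAmeas) (integrable_const _),
          integral_indicator_const (1:ℝ) hAmeas, integral_const, probReal_univ]
        simp [measureReal_def]
    _ ≤ 2*γ + Real.exp (-a) := by
        have := ENNReal.toReal_le_of_le_ofReal (by positivity) hAbound
        linarith
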